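/- Deleting a single character from a string decreases the measure δ by at most 1: if T' is obtained from T by deleting one character, then δ(T) ≤ δ(T') + 1. -/

import Mathlib

/-- Substring complexity measure `δ(T) = max_{m ≥ 1} T_m / m`, where `T_m` is the number
of distinct substrings (infixes) of `T` of length `m`. -/
noncomputable def deltaM {α : Type*} (T : List α) : ℝ :=
  ⨆ m : ℕ, ({w : List α | w.length = m + 1 ∧ w <:+: T}.ncard : ℝ) / (m + 1)

lemma substrSet_finite {α : Type*} (T : List α) (m : ℕ) :
    {w : List α | w.length = m + 1 ∧ w <:+: T}.Finite :=
  T.sublists.finite_toSet.subset fun w hw => List.mem_sublists.2 hw.2.sublist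

lemma substrSet_ncard_le {α : Type*} (T : List α) (m : ℕ) :
    {w : List α | w.length = m + 1 ∧ w <:+: T}.ncard ≤ T.sublists.length := by
  classical
  have h1 : {w : List α | w.length = m + 1 ∧ w <:+: T} ⊆ ↑T.sublists.toFinset := by
    intro w hw
    simp only [List.coe_toFinset, Set.mem_setOf_eq, List.mem_sublists]
    exact hw.2.sublist
  calc {w : List α | w.length = m + 1 ∧ w <:+: T}.ncard
      ≤ (↑T.sublists.toFinset : Set (List α)).ncard :=
        Set.ncard_le_ncard h1 T.sublists.toFinset.finite_toSet
    _ = T.sublists.toFinset.card := Set.ncard_coe_finset _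
    _ ≤ T.sublists.length := T.sublists.toFinset_card_le

/-- Key counting lemma: T_m ≤ T'_m + m. -/
lemma key_count {α : Type*} (T : List α) (p m : ℕ) :
    {w : List α | w.length = m + 1 ∧ w <:+: T}.ncard ≤
      {w : List α | w.length = m + 1 ∧ w <:+: (T.take p ++ T.drop (p + 1))}.ncard + (m + 1) := by
  set T' := T.take p ++ T.drop (p + 1) with hT'
  set C : Set (List α) := (fun i => (T.drop i).take (m + 1)) '' Set.Icc (p - m) p with hC
  have hsub : {w : List α | w.length = m + 1 ∧ w <:+: T} ⊆
      {w : List α | w.length = m + 1 ∧ w <:+: T'} ∪ C := by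
    rintro w ⟨hlen, s, t, hst⟩
    by_cases h1 : s.length + w.length ≤ p
    · left
      refine ⟨hlen, ?_⟩
      have htake : T.take p = (s ++ w) ++ t.take (p - (s ++ w).length) := by
        rw [← hst, List.take_append,
          List.take_of_length_le (by simpa using h1)]
      have hw : w <:+: T.take p := ⟨s, t.take (p - (s ++ w).length), htake.symm⟩
      exact hw.trans (List.prefix_append _ _).isInfix
    · by_cases h2 : p + 1 ≤ s.length
      · left
        refine ⟨hlen, ?_⟩
        have hdrop : T.drop (p + 1) = s.drop (p + 1) ++ (w ++ t) := by
          rw [← hst, List.append_assoc, List.drop_append_of_le_length h2]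
        have hw : w <:+: T.drop (p + 1) := ⟨s.drop (p + 1), t, by rw [hdrop, List.append_assoc]⟩
        exact hw.trans (List.suffix_append _ _).isInfix
      · right
        refine ⟨s.length, ⟨by omega, by omega⟩, ?_⟩
        show (T.drop s.length).take (m + 1) = w
        rw [← hst, List.append_assoc, List.drop_left, ← hlen, List.take_left]
  have hCfin : C.Finite := (Set.finite_Icc _ _).image _
  have hCcard : C.ncard ≤ m + 1 := by
    calc C.ncard ≤ (Set.Icc (p - m) p).ncard := Set.ncard_image_le (Set.finite_Icc _ _)
      _ ≤ m + 1 := by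
          rw [← Finset.coe_Icc, Set.ncard_coe_finset, Nat.card_Icc]; omega
  calc {w : List α | w.length = m + 1 ∧ w <:+: T}.ncard
      ≤ ({w : List α | w.length = m + 1 ∧ w <:+: T'} ∪ C).ncard :=
        Set.ncard_le_ncard hsub ((substrSet_finite T' m).union hCfin)
    _ ≤ {w : List α | w.length = m + 1 ∧ w <:+: T'}.ncard + C.ncard :=
        Set.ncard_union_le _ _
    _ ≤ _ := by omega

/-- Deleting one character (the one at position `p`) from `T` decreases `δ` by at most 1:
`δ(T) ≤ δ(T') + 1` where `T' = T[1..p-1]·T[p+1..n]`. -/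
theorem stmt4 {α : Type*} (T : List α) (p : ℕ) (hp : p < T.length) :
    deltaM T ≤ deltaM (T.take p ++ T.drop (p + 1)) + 1 := by
  set T' := T.take p ++ T.drop (p + 1) with hT'
  have hbdd : BddAbove (Set.range fun m : ℕ =>
      ({w : List α | w.length = m + 1 ∧ w <:+: T'}.ncard : ℝ) / (m + 1)) := by
    refine ⟨(T'.sublists.length : ℝ), ?_⟩
    rintro x ⟨m, rfl⟩
    have h1 : ({w : List α | w.length = m + 1 ∧ w <:+: T'}.ncard : ℝ) ≤ T'.sublists.length := by
      exact_mod_cast substrSet_ncard_le T' m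
    have h2 : ({w : List α | w.length = m + 1 ∧ w <:+: T'}.ncard : ℝ) / (m + 1) ≤
        ({w : List α | w.length = m + 1 ∧ w <:+: T'}.ncard : ℝ) :=
      div_le_self (by positivity) (by push_cast; linarith [Nat.cast_nonneg (α := ℝ) m])
    exact h2.trans h1
  rw [deltaM, deltaM]
  apply ciSup_le
  intro m
  have hpos : (0 : ℝ) < (m : ℝ) + 1 := by positivity
  have hkey : ({w : List α | w.length = m + 1 ∧ w <:+: T}.ncard : ℝ) ≤
      ({w : List α | w.length = m + 1 ∧ w <:+: T'}.ncard : ℝ) + (m + 1) := by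
    exact_mod_cast key_count T p m
  have hstep : ({w : List α | w.length = m + 1 ∧ w <:+: T}.ncard : ℝ) / (m + 1) ≤
      ({w : List α | w.length = m + 1 ∧ w <:+: T'}.ncard : ℝ) / (m + 1) + 1 := by
    have heq : (({w : List α | w.length = m + 1 ∧ w <:+: T'}.ncard : ℝ) + (m + 1)) / (m + 1) =
        ({w : List α | w.length = m + 1 ∧ w <:+: T'}.ncard : ℝ) / (m + 1) + 1 := by
      field_simp
    rw [← heq]
    gcongr
  refine hstep.trans ?_
  exact add_le_add_left (le_ciSup hbdd m) 1
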